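/- In a divided power algebra over a field of prime characteristic p, for all a, b one has (a+b)^[p] = a^[p] + b^[p] + Σ_{i=1}^{p-1} ((-1)^i / i) a^{*i} * b^{*(p-i)}, where a^{*i} denotes the i-fold product and 1/i is the inverse of i in F. -/
import Mathlib


open scoped TensorProduct

/-- Iterated product with respect to a bilinear multiplication:
`mpow mul a n = a^{*(n+1)}` (so `mpow mul a 0 = a`). -/
def mpow {F : Type} [Field F] {A : Type} [AddCommGroup A] [Module F A]
    (mul : A →ₗ[F] A →ₗ[F] A) (a : A) : ℕ → A
  | 0 => a
  | n + 1 => mul (mpow mul a n) a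

/-- A (non-unital) divided power algebra over a field `F`: a commutative associative
`F`-algebra equipped with divided power operations `(-)^[n]` for `n ≥ 1` satisfying
Cartan's axioms [dp.1]–[dp.6]. -/
structure DPAlgFull (F : Type) [Field F] (A : Type) [AddCommGroup A] [Module F A] where
  mul : A →ₗ[F] A →ₗ[F] A
  mul_comm : ∀ a b, mul a b = mul b a
  mul_assoc : ∀ a b c, mul (mul a b) c = mul a (mul b c)
  dpow : ℕ → A → A
  /-- [dp.1] `(λa)^[n] = λ^n a^[n]` -/
  dpow_smul : ∀ n, 1 ≤ n → ∀ (c : F) (a : A), dpow n (c • a) = c ^ n • dpow n a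
  /-- [dp.2] `a^[m] * a^[n] = binom(m+n,m) a^[m+n]` -/
  dpow_mul_dpow : ∀ m n, 1 ≤ m → 1 ≤ n → ∀ a,
    mul (dpow m a) (dpow n a) = (((m + n).choose m : ℕ) : F) • dpow (m + n) a
  /-- [dp.3] `(a+b)^[n] = a^[n] + ∑_{l=1}^{n-1} a^[l]*b^[n-l] + b^[n]` -/
  dpow_add : ∀ n, 1 ≤ n → ∀ a b, dpow n (a + b) =
    dpow n a + (∑ l ∈ Finset.Ioo 0 n, mul (dpow l a) (dpow (n - l) b)) + dpow n b
  /-- [dp.4] `a^[1] = a` -/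
  dpow_one : ∀ a, dpow 1 a = a
  /-- [dp.5] `(a*b)^[n] = n! a^[n]*b^[n]` -/
  dpow_mul : ∀ n, 1 ≤ n → ∀ a b,
    dpow n (mul a b) = ((n.factorial : ℕ) : F) • mul (dpow n a) (dpow n b)
  /-- [dp.6] `(a^[n])^[m] = ((mn)!/(m!(n!)^m)) a^[mn]` -/
  dpow_comp : ∀ m n, 1 ≤ m → 1 ≤ n → ∀ a, dpow m (dpow n a) =
    ((((m * n).factorial / (m.factorial * n.factorial ^ m)) : ℕ) : F) • dpow (m * n) a

lemma mpow_eq_factorial_smul_dpow {F : Type} [Field F] {A : Type} [AddCommGroup A]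
    [Module F A] (S : DPAlgFull F A) (a : A) :
    ∀ n : ℕ, mpow S.mul a n = (((n + 1).factorial : ℕ) : F) • S.dpow (n + 1) a := by
  intro n
  induction n with
  | zero => simp [mpow, S.dpow_one]
  | succ n ih =>
      have h1 : S.mul (S.dpow (n + 1) a) (S.dpow 1 a)
          = (((n + 2).choose (n + 1) : ℕ) : F) • S.dpow (n + 2) a := by
        have := S.dpow_mul_dpow (n + 1) 1 (by omega) (by omega) a
        simpa using this
      have : mpow S.mul a (n + 1) = S.mul (mpow S.mul a n) a := rfl
      rw [this, ih]
      rw [map_smul, LinearMap.smul_apply]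
      have h2 : (S.mul (S.dpow (n+1) a)) a = (S.mul (S.dpow (n+1) a)) (S.dpow 1 a) := by
        rw [S.dpow_one]
      rw [h2, h1, smul_smul]
      congr 1
      rw [← Nat.cast_mul]
      congr 1
      rw [Nat.choose_succ_self_right]
      rw [Nat.factorial_succ (n+1)]
      ring

lemma fact_mul_fact_eq {p : ℕ} (hp : p.Prime) (F : Type) [Field F] [CharP F p] :
    ∀ l : ℕ, 0 < l → l < p →
      ((l.factorial : ℕ) : F) * (((p - l).factorial : ℕ) : F) = (-1) ^ l * l := by
  have : Fact p.Prime := ⟨hp⟩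
  have wilson : (((p - 1).factorial : ℕ) : F) = -1 := by
    have h := ZMod.wilsons_lemma p
    have h2 := congrArg (ZMod.castHom (dvd_refl p) F) h
    rwa [map_natCast, map_neg, map_one] at h2
  intro l
  induction l with
  | zero => omega
  | succ l ih =>
      intro _ hlt
      rcases Nat.eq_zero_or_pos l with hl0 | hl0
      · subst hl0; simpa using wilson
      · have ihl := ih hl0 (by omega)
        have hpl : p - l = (p - (l + 1)) + 1 := by omega
        have hcast : ((p - (l + 1) : ℕ) : F) + 1 = -(l : F) := by
          have h3 : ((p - (l + 1) : ℕ) : F) = (p : F) - ((l : F) + 1) := by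
            rw [Nat.cast_sub (by omega)]; push_cast; ring
          rw [h3, CharP.cast_eq_zero F p]; ring
        have hlne : (l : F) ≠ 0 := by
          intro h
          have := (CharP.cast_eq_zero_iff F p l).mp h
          have := Nat.le_of_dvd hl0 this
          omega
        rw [hpl] at ihl
        rw [Nat.factorial_succ] at ihl
        push_cast at ihl
        rw [hcast] at ihl
        -- ihl : ↑l ! * (-(l:F) * ↑(p - (l+1))!) = (-1)^l * l
        have key : ((l.factorial : ℕ) : F) * (((p - (l + 1)).factorial : ℕ) : F)
            = (-1) ^ (l + 1) := by
          apply mul_left_cancel₀ hlne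
          linear_combination -ihl
        rw [Nat.factorial_succ]
        push_cast
        calc ((l:F) + 1) * (l.factorial : F) * ((p - (l+1)).factorial : F)
            = ((l:F) + 1) * ((-1) ^ (l + 1)) := by rw [mul_assoc, key]
          _ = (-1) ^ (l + 1) * ((l : F) + 1) := by ring

/-- In a divided power algebra over a field of prime characteristic
`p`, for all `a, b`:
`(a+b)^[p] = a^[p] + b^[p] + ∑_{i=1}^{p-1} ((-1)^i / i) a^{*i} * b^{*(p-i)}`
(here `mpow S.mul a (i-1) = a^{*i}`). -/
theorem dpow_p_add_of_charP
    (p : ℕ) (hp : p.Prime) (F : Type) [Field F] [CharP F p]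
    (A : Type) [AddCommGroup A] [Module F A] (S : DPAlgFull F A) :
    ∀ a b : A, S.dpow p (a + b) = S.dpow p a + S.dpow p b +
      ∑ i ∈ Finset.Ioo 0 p, ((-1 : F) ^ i * (i : F)⁻¹) •
        S.mul (mpow S.mul a (i - 1)) (mpow S.mul b (p - i - 1)) := by

  intro a b
  rw [S.dpow_add p hp.one_lt.le a b, add_right_comm]
  congr 1
  apply Finset.sum_congr rfl
  intro i hi
  obtain ⟨hi0, hip⟩ := Finset.mem_Ioo.mp hi
  have h1 : mpow S.mul a (i - 1) = ((i.factorial : ℕ) : F) • S.dpow i a := by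
    have := mpow_eq_factorial_smul_dpow S a (i - 1)
    rwa [Nat.sub_add_cancel hi0] at this
  have h2 : mpow S.mul b (p - i - 1) = (((p - i).factorial : ℕ) : F) • S.dpow (p - i) b := by
    have := mpow_eq_factorial_smul_dpow S b (p - i - 1)
    rwa [Nat.sub_add_cancel (by omega)] at this
  have hine : (i : F) ≠ 0 := by
    intro h
    have := (CharP.cast_eq_zero_iff F p i).mp h
    have := Nat.le_of_dvd hi0 this
    omega
  have key := fact_mul_fact_eq hp F i hi0 hip
  rw [h1, h2]
  simp only [map_smul, LinearMap.smul_apply, smul_smul]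
  have h5 : ((-1 : F) ^ i) * ((-1 : F) ^ i) = 1 := by
    rw [← mul_pow]; norm_num
  convert (one_smul F ((S.mul (S.dpow i a)) (S.dpow (p - i) b))).symm using 2
  field_simp
  linear_combination ((-1 : F) ^ i) * key + (i : F) * h5
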